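/- If f is the Maxwellian f(v) = n (m/(2πT'))^{d/2} exp(−m|v−u|²/(2T')) with T' = T − mε > 0, then ψ^ε * log(ψ^ε * f) is a quadratic polynomial: (ψ^ε * log(ψ^ε * f))(v) = λ^{(0)} + m λ^{(1)}·v + m λ^{(2)}|v|²/2 where λ^{(2)} = −1/T, λ^{(1)} = u/T. -/

import Mathlib

open scoped RealInnerProductSpace
open MeasureTheory
open Real

section Helpers

variable {V : Type*} [NormedAddCommGroup V] [InnerProductSpace ℝ V]
  [FiniteDimensional ℝ V] [MeasurableSpace V] [BorelSpace V]

lemma gauss_lin {b : ℝ} (hb : 0 < b) (c : ℝ) (w : V) :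
    ∫ v : V, Real.exp (-b * ‖v‖ ^ 2 + c * ⟪w, v⟫) =
      (π / b) ^ ((Module.finrank ℝ V : ℝ) / 2) * Real.exp (c ^ 2 * ‖w‖ ^ 2 / (4 * b)) := by
  have h := GaussianFourier.integral_cexp_neg_mul_sq_norm_add (V := V)
    (b := (b : ℂ)) (by simpa using hb) (c : ℂ) w
  rw [← Complex.ofReal_inj]
  have h2 : Complex.ofReal (∫ v : V, Real.exp (-b * ‖v‖ ^ 2 + c * ⟪w, v⟫))
      = ∫ v : V, Complex.exp (-(b : ℂ) * ‖v‖ ^ 2 + (c : ℂ) * ⟪w, v⟫) := by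
    change Complex.ofRealLI (∫ v : V, Real.exp (-b * ‖v‖ ^ 2 + c * ⟪w, v⟫)) = _
    rw [← Complex.ofRealLI.integral_comp_comm]
    congr 1; funext v
    show ((Real.exp (-b * ‖v‖ ^ 2 + c * ⟪w, v⟫) : ℝ) : ℂ) = _
    rw [Complex.ofReal_exp]; push_cast; ring_nf
  rw [h2, h, Complex.ofReal_mul, Complex.ofReal_cpow (by positivity), Complex.ofReal_exp]
  push_cast
  ring_nf

lemma integrable_gauss {b : ℝ} (hb : 0 < b) :
    Integrable (fun v : V => Real.exp (-b * ‖v‖ ^ 2)) := by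
  have h := (GaussianFourier.integrable_cexp_neg_mul_sq_norm_add (V := V)
    (b := (b : ℂ)) (by simpa using hb) 0 0).norm
  refine h.congr (Filter.Eventually.of_forall fun v => ?_)
  have hre : (-(b : ℂ) * (‖v‖ : ℂ) ^ 2 + 0 * ⟪(0 : V), v⟫) = ((-b * ‖v‖ ^ 2 : ℝ) : ℂ) := by
    push_cast; ring
  simp only [hre, Complex.norm_exp, Complex.ofReal_re]

lemma integrable_sq_gauss {b : ℝ} (hb : 0 < b) :
    Integrable (fun v : V => ‖v‖ ^ 2 * Real.exp (-b * ‖v‖ ^ 2)) := by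
  apply Integrable.mono' (((integrable_gauss (V := V) (show 0 < b / 2 by linarith)).const_mul
    (2 / b)))
  · exact (Continuous.mul (by fun_prop) (by fun_prop)).aestronglyMeasurable
  · filter_upwards with v
    have h1 : (b / 2) * ‖v‖ ^ 2 ≤ Real.exp ((b / 2) * ‖v‖ ^ 2) := by
      have := Real.add_one_le_exp ((b / 2) * ‖v‖ ^ 2); nlinarith
    have hexp : (0:ℝ) < Real.exp (-b * ‖v‖ ^ 2) := Real.exp_pos _
    rw [Real.norm_eq_abs, abs_of_nonneg (by positivity)]
    calc ‖v‖ ^ 2 * Real.exp (-b * ‖v‖ ^ 2)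
        = (2 / b) * ((b / 2 * ‖v‖ ^ 2) * Real.exp (-b * ‖v‖ ^ 2)) := by field_simp
      _ ≤ (2 / b) * (Real.exp (b / 2 * ‖v‖ ^ 2) * Real.exp (-b * ‖v‖ ^ 2)) := by
          have := mul_le_mul_of_nonneg_right h1 hexp.le
          have h2b : (0:ℝ) ≤ 2 / b := by positivity
          exact mul_le_mul_of_nonneg_left this h2b
      _ = 2 / b * Real.exp (-(b / 2) * ‖v‖ ^ 2) := by rw [← Real.exp_add]; ring_nf

lemma integrable_norm_gauss {b : ℝ} (hb : 0 < b) :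
    Integrable (fun v : V => ‖v‖ * Real.exp (-b * ‖v‖ ^ 2)) := by
  apply Integrable.mono' ((integrable_gauss (V := V) hb).add (integrable_sq_gauss hb))
  · exact (Continuous.mul (by fun_prop) (by fun_prop)).aestronglyMeasurable
  · filter_upwards with v
    simp only [Pi.add_apply]
    rw [Real.norm_eq_abs, abs_of_nonneg (by positivity)]
    have h1 : ‖v‖ ≤ 1 + ‖v‖ ^ 2 := by nlinarith [sq_nonneg (‖v‖ - 1)]
    have hexp : (0:ℝ) < Real.exp (-b * ‖v‖ ^ 2) := Real.exp_pos _
    nlinarith [mul_le_mul_of_nonneg_right h1 hexp.le]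

end Helpers

/-- The Gaussian mollifier `ψ^ε(v) = (2πε)^{-d/2} exp(−|v|²/(2ε))` on `ℝ^d`. -/
noncomputable def gaussMollifier (d : ℕ) (ε : ℝ) (v : EuclideanSpace ℝ (Fin d)) : ℝ :=
  (2 * Real.pi * ε) ^ (-(d : ℝ) / 2) * Real.exp (-‖v‖ ^ 2 / (2 * ε))

/-- if `f` is the Maxwellian with temperature `T' = T − mε > 0`, then
`ψ^ε * log(ψ^ε * f)` is the quadratic polynomial `λ⁰ + mλ¹·v + mλ²|v|²/2`
with `λ² = −1/T` and `λ¹ = u/T`. -/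
theorem quadratic_of_maxwellian (d : ℕ) (ε m T n : ℝ)
    (hε : 0 < ε) (hm : 0 < m) (hT : m * ε < T) (hn : 0 < n)
    (u : EuclideanSpace ℝ (Fin d))
    (f : EuclideanSpace ℝ (Fin d) → ℝ)
    (hf : ∀ v, f v = n * (m / (2 * Real.pi * (T - m * ε))) ^ ((d : ℝ) / 2) *
        Real.exp (-(m * ‖v - u‖ ^ 2) / (2 * (T - m * ε)))) :
    ∃ lam0 : ℝ, ∀ v : EuclideanSpace ℝ (Fin d),
      (∫ w, gaussMollifier d ε (v - w) *
          Real.log (∫ x, gaussMollifier d ε (w - x) * f x))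
        = lam0 + m * ⟪(1 / T) • u, v⟫ + m * (-(1 / T)) * ‖v‖ ^ 2 / 2 := by
  have hT' : 0 < T - m * ε := by linarith
  have hTpos : 0 < T := lt_trans (mul_pos hm hε) hT
  have hπ : (0:ℝ) < π := Real.pi_pos
  set A : ℝ := (2 * π * ε) ^ (-(d : ℝ) / 2) with hA
  have hApos : 0 < A := by rw [hA]; positivity
  have ha : (0:ℝ) < 1 / (2 * ε) := by positivity
  have hb' : (0:ℝ) < m / (2 * (T - m * ε)) := by positivity
  have hab : (0:ℝ) < 1 / (2 * ε) + m / (2 * (T - m * ε)) := by positivity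
  -- mollifier in standard form
  have hψ : ∀ z : (EuclideanSpace ℝ (Fin d)), gaussMollifier d ε z = A * rexp (-(1 / (2 * ε)) * ‖z‖ ^ 2) := by
    intro z
    rw [gaussMollifier, hA]
    congr 1
    congr 1
    field_simp
  -- Step 1 : inner convolution
  have hinner : ∀ w : (EuclideanSpace ℝ (Fin d)), (∫ x, gaussMollifier d ε (w - x) * f x)
      = n * (m / (2 * π * T)) ^ ((d : ℝ) / 2) *
        rexp (-(m / (2 * T)) * ‖w - u‖ ^ 2) := by
    intro w
    rw [← integral_add_right_eq_self (μ := volume)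
      (fun x : (EuclideanSpace ℝ (Fin d)) => gaussMollifier d ε (w - x) * f x) u]
    have hpt : ∀ y : (EuclideanSpace ℝ (Fin d)), gaussMollifier d ε (w - (y + u)) * f (y + u)
        = (A * (n * (m / (2 * π * (T - m * ε))) ^ ((d : ℝ) / 2)) *
            rexp (-(1 / (2 * ε)) * ‖w - u‖ ^ 2)) *
          rexp (-(1 / (2 * ε) + m / (2 * (T - m * ε))) * ‖y‖ ^ 2 +
            (2 * (1 / (2 * ε))) * ⟪w - u, y⟫) := by
      intro y
      rw [hψ, hf]
      have hn1 : w - (y + u) = (w - u) - y := by abel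
      have hn2 : (y + u) - u = y := by abel
      rw [hn1, hn2]
      have hE : (-(1 / (2 * ε)) * ‖(w - u) - y‖ ^ 2) + (-(m * ‖y‖ ^ 2) / (2 * (T - m * ε)))
          = (-(1 / (2 * ε)) * ‖w - u‖ ^ 2) +
            (-(1 / (2 * ε) + m / (2 * (T - m * ε))) * ‖y‖ ^ 2 +
              (2 * (1 / (2 * ε))) * ⟪w - u, y⟫) := by
        rw [norm_sub_sq_real]; field_simp; ring
      calc A * rexp (-(1 / (2 * ε)) * ‖(w - u) - y‖ ^ 2) *
            (n * (m / (2 * π * (T - m * ε))) ^ ((d : ℝ) / 2) *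
              rexp (-(m * ‖y‖ ^ 2) / (2 * (T - m * ε))))
          = (A * (n * (m / (2 * π * (T - m * ε))) ^ ((d : ℝ) / 2))) *
            rexp ((-(1 / (2 * ε)) * ‖(w - u) - y‖ ^ 2) +
              (-(m * ‖y‖ ^ 2) / (2 * (T - m * ε)))) := by
            rw [Real.exp_add]; ring
        _ = _ := by rw [hE, Real.exp_add]; ring
    simp only [hpt]
    rw [integral_const_mul, gauss_lin hab (2 * (1 / (2 * ε))) (w - u),
      finrank_euclideanSpace_fin]
    have hexp : rexp (-(1 / (2 * ε)) * ‖w - u‖ ^ 2) *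
        rexp ((2 * (1 / (2 * ε))) ^ 2 * ‖w - u‖ ^ 2 /
          (4 * (1 / (2 * ε) + m / (2 * (T - m * ε)))))
        = rexp (-(m / (2 * T)) * ‖w - u‖ ^ 2) := by
      rw [← Real.exp_add]
      congr 1
      have h4 : 1 / (2 * ε) + m / (2 * (T - m * ε)) = T / (2 * ε * (T - m * ε)) := by
        rw [div_add_div _ _ (by positivity) (by positivity), div_eq_div_iff (by positivity) (by positivity)]; ring
      rw [h4]
      field_simp
      ring
    have hcoef : A * (m / (2 * π * (T - m * ε))) ^ ((d : ℝ) / 2) *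
        (π / (1 / (2 * ε) + m / (2 * (T - m * ε)))) ^ ((d : ℝ) / 2)
        = (m / (2 * π * T)) ^ ((d : ℝ) / 2) := by
      have h4 : 1 / (2 * ε) + m / (2 * (T - m * ε)) = T / (2 * ε * (T - m * ε)) := by
        rw [div_add_div _ _ (by positivity) (by positivity), div_eq_div_iff (by positivity) (by positivity)]; ring
      rw [h4, hA]
      rw [show -(d : ℝ) / 2 = -((d : ℝ) / 2) by ring, Real.rpow_neg (by positivity),
        ← Real.inv_rpow (by positivity), ← Real.mul_rpow (by positivity) (by positivity),
        ← Real.mul_rpow (by positivity) (by positivity)]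
      congr 1
      field_simp [(by nlinarith : (0:ℝ) < T - ε * m).ne']
    calc A * (n * (m / (2 * π * (T - m * ε))) ^ ((d : ℝ) / 2)) *
          rexp (-(1 / (2 * ε)) * ‖w - u‖ ^ 2) *
          ((π / (1 / (2 * ε) + m / (2 * (T - m * ε)))) ^ ((d : ℝ) / 2) *
            rexp ((2 * (1 / (2 * ε))) ^ 2 * ‖w - u‖ ^ 2 /
              (4 * (1 / (2 * ε) + m / (2 * (T - m * ε))))))
        = n * (A * (m / (2 * π * (T - m * ε))) ^ ((d : ℝ) / 2) *
            (π / (1 / (2 * ε) + m / (2 * (T - m * ε)))) ^ ((d : ℝ) / 2)) *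
          (rexp (-(1 / (2 * ε)) * ‖w - u‖ ^ 2) *
            rexp ((2 * (1 / (2 * ε))) ^ 2 * ‖w - u‖ ^ 2 /
              (4 * (1 / (2 * ε) + m / (2 * (T - m * ε)))))) := by ring
      _ = _ := by rw [hexp, hcoef]
  -- Step 2 : logarithm
  set Clog : ℝ := Real.log (n * (m / (2 * π * T)) ^ ((d : ℝ) / 2)) with hClog
  have hlog : ∀ w : (EuclideanSpace ℝ (Fin d)), Real.log (∫ x, gaussMollifier d ε (w - x) * f x)
      = Clog + (-(m / (2 * T)) * ‖w - u‖ ^ 2) := by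
    intro w
    rw [hinner w, mul_assoc, Real.log_mul (by positivity) (by positivity),
      Real.log_mul (by positivity) (Real.exp_ne_zero _), Real.log_exp, hClog,
      Real.log_mul (by positivity) (by positivity)]
    ring
  -- Step 3 : outer convolution
  refine ⟨Clog - (m / (2 * T)) * ‖u‖ ^ 2 -
    (m / (2 * T)) * (∫ z : (EuclideanSpace ℝ (Fin d)), ‖z‖ ^ 2 * (A * rexp (-(1 / (2 * ε)) * ‖z‖ ^ 2))), fun v => ?_⟩
  simp only [hlog]
  have hsub : (∫ w : (EuclideanSpace ℝ (Fin d)), gaussMollifier d ε (v - w) *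
        (Clog + (-(m / (2 * T)) * ‖w - u‖ ^ 2)))
      = ∫ z : (EuclideanSpace ℝ (Fin d)), gaussMollifier d ε z *
          (Clog + (-(m / (2 * T)) * ‖(v - u) - z‖ ^ 2)) := by
    rw [← integral_sub_left_eq_self (fun z : (EuclideanSpace ℝ (Fin d)) => gaussMollifier d ε z *
        (Clog + (-(m / (2 * T)) * ‖(v - u) - z‖ ^ 2))) volume v]
    congr 1
    funext w
    beta_reduce
    rw [show (v - u) - (v - w) = w - u by abel]
  rw [hsub]
  have hsplit : ∀ z : (EuclideanSpace ℝ (Fin d)), gaussMollifier d ε z *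
      (Clog + (-(m / (2 * T)) * ‖(v - u) - z‖ ^ 2))
      = (Clog - (m / (2 * T)) * ‖v - u‖ ^ 2) * (A * rexp (-(1 / (2 * ε)) * ‖z‖ ^ 2)) +
        (2 * (m / (2 * T))) * (⟪v - u, z⟫ * (A * rexp (-(1 / (2 * ε)) * ‖z‖ ^ 2))) +
        (-(m / (2 * T))) * (‖z‖ ^ 2 * (A * rexp (-(1 / (2 * ε)) * ‖z‖ ^ 2))) := by
    intro z
    rw [hψ, norm_sub_sq_real]
    ring
  simp only [hsplit]
  -- integrability
  have hI0 : Integrable (fun z : (EuclideanSpace ℝ (Fin d)) => A * rexp (-(1 / (2 * ε)) * ‖z‖ ^ 2)) :=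
    (integrable_gauss ha).const_mul A
  have hIin : Integrable (fun z : (EuclideanSpace ℝ (Fin d)) => ⟪v - u, z⟫ * (A * rexp (-(1 / (2 * ε)) * ‖z‖ ^ 2))) := by
    apply Integrable.mono' (((integrable_norm_gauss (V := (EuclideanSpace ℝ (Fin d))) ha).const_mul (‖v - u‖ * A)))
    · apply Continuous.aestronglyMeasurable
      exact (continuous_const.inner continuous_id).mul (by fun_prop)
    · filter_upwards with z
      have h1 : |⟪v - u, z⟫| ≤ ‖v - u‖ * ‖z‖ := abs_real_inner_le_norm _ _
      have h2 : (0:ℝ) < rexp (-(1 / (2 * ε)) * ‖z‖ ^ 2) := Real.exp_pos _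
      rw [Real.norm_eq_abs, abs_mul, abs_of_nonneg (by positivity :
        (0:ℝ) ≤ A * rexp (-(1 / (2 * ε)) * ‖z‖ ^ 2))]
      have h3 := mul_le_mul_of_nonneg_right h1 (by positivity :
        (0:ℝ) ≤ A * rexp (-(1 / (2 * ε)) * ‖z‖ ^ 2))
      exact le_trans h3 (le_of_eq (by ring))
  have hIsq : Integrable (fun z : (EuclideanSpace ℝ (Fin d)) => ‖z‖ ^ 2 * (A * rexp (-(1 / (2 * ε)) * ‖z‖ ^ 2))) := by
    have h := (integrable_sq_gauss (V := (EuclideanSpace ℝ (Fin d))) ha).const_mul A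
    exact h.congr (Filter.Eventually.of_forall fun z => by ring)
  have hf1 : Integrable (fun z : (EuclideanSpace ℝ (Fin d)) =>
      (Clog - m / (2 * T) * ‖v - u‖ ^ 2) * (A * rexp (-(1 / (2 * ε)) * ‖z‖ ^ 2))) volume :=
    hI0.const_mul _
  have hf2 : Integrable (fun z : (EuclideanSpace ℝ (Fin d)) =>
      2 * (m / (2 * T)) * (⟪v - u, z⟫ * (A * rexp (-(1 / (2 * ε)) * ‖z‖ ^ 2)))) volume :=
    hIin.const_mul _
  have hf3 : Integrable (fun z : (EuclideanSpace ℝ (Fin d)) =>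
      -(m / (2 * T)) * (‖z‖ ^ 2 * (A * rexp (-(1 / (2 * ε)) * ‖z‖ ^ 2)))) volume :=
    hIsq.const_mul _
  have hf12 : Integrable (fun z : (EuclideanSpace ℝ (Fin d)) =>
      (Clog - m / (2 * T) * ‖v - u‖ ^ 2) * (A * rexp (-(1 / (2 * ε)) * ‖z‖ ^ 2)) +
      2 * (m / (2 * T)) * (⟪v - u, z⟫ * (A * rexp (-(1 / (2 * ε)) * ‖z‖ ^ 2)))) volume :=
    hf1.add hf2
  rw [integral_add hf12 hf3, integral_add hf1 hf2,
    integral_const_mul (Clog - m / (2 * T) * ‖v - u‖ ^ 2),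
    integral_const_mul (2 * (m / (2 * T))),
    integral_const_mul (-(m / (2 * T)))]
  -- the normalization integral
  have hψ1 : (∫ z : (EuclideanSpace ℝ (Fin d)), A * rexp (-(1 / (2 * ε)) * ‖z‖ ^ 2)) = 1 := by
    rw [integral_const_mul, GaussianFourier.integral_rexp_neg_mul_sq_norm ha,
      finrank_euclideanSpace_fin,
      show π / (1 / (2 * ε)) = 2 * π * ε by field_simp, hA,
      ← Real.rpow_add (by positivity)]
    rw [show -(d:ℝ) / 2 + (d:ℝ) / 2 = 0 by ring, Real.rpow_zero]
  -- the odd integral vanishes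
  have hodd : (∫ z : (EuclideanSpace ℝ (Fin d)), ⟪v - u, z⟫ * (A * rexp (-(1 / (2 * ε)) * ‖z‖ ^ 2))) = 0 := by
    have h : (∫ z : (EuclideanSpace ℝ (Fin d)), ⟪v - u, z⟫ * (A * rexp (-(1 / (2 * ε)) * ‖z‖ ^ 2)))
        = - ∫ z : (EuclideanSpace ℝ (Fin d)), ⟪v - u, z⟫ *
            (A * rexp (-(1 / (2 * ε)) * ‖z‖ ^ 2)) := by
      conv_lhs => rw [← integral_neg_eq_self (fun z : (EuclideanSpace ℝ (Fin d)) =>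
        ⟪v - u, z⟫ * (A * rexp (-(1 / (2 * ε)) * ‖z‖ ^ 2))) volume]
      rw [← integral_neg]
      congr 1
      funext z
      show ⟪v - u, -z⟫ * (A * rexp (-(1 / (2 * ε)) * ‖-z‖ ^ 2))
        = -(⟪v - u, z⟫ * (A * rexp (-(1 / (2 * ε)) * ‖z‖ ^ 2)))
      rw [inner_neg_right, norm_neg]
      ring
    linarith
  rw [hψ1, hodd]
  -- final algebra
  rw [real_inner_smul_left]
  have hns : ‖v - u‖ ^ 2 = ‖v‖ ^ 2 - 2 * ⟪u, v⟫ + ‖u‖ ^ 2 := by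
    rw [norm_sub_sq_real, real_inner_comm]
  rw [hns]
  field_simp
  ring_nf
  rw [show (fun a : EuclideanSpace ℝ (Fin d) => ‖a‖ ^ 2 * A * rexp (‖a‖ ^ 2 * ε⁻¹ * (-1 / 2))) =
    fun z => A * ‖z‖ ^ 2 * rexp (ε⁻¹ * ‖z‖ ^ 2 * (-1 / 2)) from funext fun z => by ring]
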